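/- arXiv:0802.2843 — 2 statements merged into one kernel-verified Lean document; each statement's English description precedes it below -/
import Mathlib

section
/- For every function f : [n] → [n] and every positive integer d, there exists a set A of at most d permutations of [n] such that for each r ∈ [n], either some π ∈ A satisfies π(r) = f(r), or the fiber f⁻¹(f(r)) has more than d elements. -/
/-- Any function that is injective on a finset extends to a permutation
agreeing with it on that finset. -/
lemma exists_perm_extend {α : Type*} [DecidableEq α] (g : α → α) (s : Finset α)
    (hinj : Set.InjOn g s) : ∃ π : Equiv.Perm α, ∀ r ∈ s, π r = g r := by
  induction s using Finset.induction with
  | empty => exact ⟨1, by simp⟩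
  | @insert a s ha ih =>
    obtain ⟨π, hπ⟩ := ih (hinj.mono (by simp [Finset.coe_subset, Finset.subset_insert]))
    refine ⟨Equiv.swap (g a) (π a) * π, ?_⟩
    intro r hr
    rcases Finset.mem_insert.mp hr with rfl | hr
    · simp [Equiv.swap_apply_right]
    · have h1 : π r = g r := hπ r hr
      have hra : r ≠ a := fun h => ha (h ▸ hr)
      have hga : g r ≠ g a := fun h =>
        hra (hinj (by simp [hr]) (by simp) h)
      have hpa : g r ≠ π a := by
        rw [← h1]; exact fun h => hra (π.injective h)
      simp only [Equiv.Perm.mul_apply, h1]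
      exact Equiv.swap_apply_of_ne_of_ne hga hpa

/-- For every `f : [n] → [n]` and positive `d`, there is a set of at most `d`
permutations of `[n]` that `d`-covers `f`. -/
theorem perm_cover (n d : ℕ) (hd : 0 < d) (f : Fin n → Fin n) :
    ∃ A : Finset (Equiv.Perm (Fin n)), A.card ≤ d ∧
      ∀ r : Fin n, (∃ π ∈ A, π r = f r) ∨
        d < (Finset.univ.filter fun s => f s = f r).card := by
  classical
  -- rank of r within its fiber
  set rank : Fin n → ℕ := fun r => (Finset.univ.filter fun s => f s = f r ∧ s < r).card with hrank
  -- rank is injective on fibers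
  have rank_inj : ∀ r r' : Fin n, f r = f r' → rank r = rank r' → r = r' := by
    intro r r' hf hrk
    by_contra hne
    wlog hlt : r < r' generalizing r r'
    · exact this r' r hf.symm hrk.symm (Ne.symm hne) (by omega)
    have hsub : (Finset.univ.filter fun s => f s = f r ∧ s < r) ⊂
        (Finset.univ.filter fun s => f s = f r' ∧ s < r') := by
      constructor
      · intro s hs
        simp only [Finset.mem_filter, Finset.mem_univ, true_and] at hs ⊢
        exact ⟨hs.1.trans hf, hs.2.trans hlt⟩
      · intro hsub'
        have : r ∈ (Finset.univ.filter fun s => f s = f r' ∧ s < r') := by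
          simp [hf, hlt]
        exact absurd (hsub' this) (by simp)
    have := Finset.card_lt_card hsub
    simp only [hrank] at hrk
    omega
  -- permutations covering each rank class
  have hex : ∀ i : ℕ, ∃ π : Equiv.Perm (Fin n),
      ∀ r ∈ Finset.univ.filter (fun r => rank r = i), π r = f r := by
    intro i
    apply exists_perm_extend
    intro r hr r' hr' hf
    simp only [Finset.coe_filter, Set.mem_setOf_eq] at hr hr'
    exact rank_inj r r' hf (hr.2.trans hr'.2.symm)
  choose P hP using hex
  refine ⟨(Finset.range d).image P, ?_, ?_⟩
  · exact (Finset.card_image_le).trans (by simp)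
  · intro r
    by_cases hbig : d < (Finset.univ.filter fun s => f s = f r).card
    · exact Or.inr hbig
    · left
      push_neg at hbig
      have hrd : rank r < d := by
        have hss : (Finset.univ.filter fun s => f s = f r ∧ s < r) ⊂
            (Finset.univ.filter fun s => f s = f r) := by
          constructor
          · intro s hs
            simp only [Finset.mem_filter, Finset.mem_univ, true_and] at hs ⊢
            exact hs.1
          · intro h
            have : r ∈ (Finset.univ.filter fun s => f s = f r) := by simp
            exact absurd (h this) (by simp)
        have := Finset.card_lt_card hss
        simp only [hrank]
        omega
      refine ⟨P (rank r), ?_, ?_⟩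
      · exact Finset.mem_image_of_mem P (Finset.mem_range.mpr hrd)
      · exact hP (rank r) r (by simp)
end

section
/- If T ⊆ {0,1}ⁿ is uncrossed (contains no crossing pair), then T contains at most 2 strings of weight exactly n/2. -/
/-- A pair `(x,x')` is crossing if all four index sets `I_{ab}` are nonempty. -/
def Crossing {n : ℕ} (x x' : Fin n → Bool) : Prop :=
  ∀ a b : Bool, ∃ j : Fin n, x j = a ∧ x' j = b

lemma ones_zero_card {n : ℕ} (x : Fin n → Bool) :
    (Finset.univ.filter fun j => x j = true).card
      + (Finset.univ.filter fun j => x j = false).card = n := by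
  have := Finset.card_filter_add_card_filter_not
    (s := (Finset.univ : Finset (Fin n))) (p := fun j => x j = true)
  simpa using this

lemma comp_of_not_crossing {n : ℕ} (hn : Even n) (x y : Fin n → Bool)
    (hx : (Finset.univ.filter fun j => x j = true).card = n / 2)
    (hy : (Finset.univ.filter fun j => y j = true).card = n / 2)
    (hxy : x ≠ y) (hnc : ¬ Crossing x y) : y = fun j => !(x j) := by
  obtain ⟨k, hk⟩ := hn
  have hn2 : n / 2 + n / 2 = n := by omega
  simp only [Crossing, not_forall, not_exists, not_and] at hnc
  obtain ⟨a, b, h⟩ := hnc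
  have hxc := ones_zero_card x
  have hyc := ones_zero_card y
  rcases a <;> rcases b
  · -- I_{00} empty : x j = false → y j = true
    have hsub : (Finset.univ.filter fun j => x j = false)
        ⊆ (Finset.univ.filter fun j => y j = true) := by
      intro j hj
      simp only [Finset.mem_filter, Finset.mem_univ, true_and] at hj ⊢
      have := h j hj
      cases hyj : y j
      · exact absurd hyj this
      · rfl
    have heq := Finset.eq_of_subset_of_card_le hsub (by omega)
    funext j
    have : (j ∈ Finset.univ.filter fun j => x j = false)
        ↔ (j ∈ Finset.univ.filter fun j => y j = true) := by rw [heq]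
    simp only [Finset.mem_filter, Finset.mem_univ, true_and] at this
    cases hxj : x j <;> cases hyj : y j <;> simp_all
  · -- I_{01} empty : x j = false → y j = false
    have hsub : (Finset.univ.filter fun j => y j = true)
        ⊆ (Finset.univ.filter fun j => x j = true) := by
      intro j hj
      simp only [Finset.mem_filter, Finset.mem_univ, true_and] at hj ⊢
      cases hxj : x j
      · exact absurd hj (h j hxj)
      · rfl
    have heq := Finset.eq_of_subset_of_card_le hsub (by omega)
    exfalso; apply hxy
    funext j
    have : (j ∈ Finset.univ.filter fun j => y j = true)
        ↔ (j ∈ Finset.univ.filter fun j => x j = true) := by rw [heq]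
    simp only [Finset.mem_filter, Finset.mem_univ, true_and] at this
    cases hxj : x j <;> cases hyj : y j <;> simp_all
  · -- I_{10} empty : x j = true → y j = true
    have hsub : (Finset.univ.filter fun j => x j = true)
        ⊆ (Finset.univ.filter fun j => y j = true) := by
      intro j hj
      simp only [Finset.mem_filter, Finset.mem_univ, true_and] at hj ⊢
      cases hyj : y j
      · exact absurd hyj (h j hj)
      · rfl
    have heq := Finset.eq_of_subset_of_card_le hsub (by omega)
    exfalso; apply hxy
    funext j
    have : (j ∈ Finset.univ.filter fun j => x j = true)
        ↔ (j ∈ Finset.univ.filter fun j => y j = true) := by rw [heq]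
    simp only [Finset.mem_filter, Finset.mem_univ, true_and] at this
    cases hxj : x j <;> cases hyj : y j <;> simp_all
  · -- I_{11} empty : x j = true → y j = false
    have hsub : (Finset.univ.filter fun j => x j = true)
        ⊆ (Finset.univ.filter fun j => y j = false) := by
      intro j hj
      simp only [Finset.mem_filter, Finset.mem_univ, true_and] at hj ⊢
      cases hyj : y j
      · rfl
      · exact absurd hyj (h j hj)
    have heq := Finset.eq_of_subset_of_card_le hsub (by omega)
    funext j
    have : (j ∈ Finset.univ.filter fun j => x j = true)
        ↔ (j ∈ Finset.univ.filter fun j => y j = false) := by rw [heq]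
    simp only [Finset.mem_filter, Finset.mem_univ, true_and] at this
    cases hxj : x j <;> cases hyj : y j <;> simp_all

/-- An uncrossed set contains at most two strings of weight `n/2`. -/
theorem uncrossed_half_weight (n : ℕ) (hn : Even n) (T : Finset (Fin n → Bool))
    (hT : ∀ x ∈ T, ∀ x' ∈ T, x ≠ x' → ¬ Crossing x x') :
    (T.filter fun x => (Finset.univ.filter fun j => x j = true).card = n / 2).card ≤ 2 := by
  set S := T.filter fun x => (Finset.univ.filter fun j => x j = true).card = n / 2 with hS
  rcases S.eq_empty_or_nonempty with h | ⟨x, hx⟩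
  · simp [h]
  · have hxT : x ∈ T := (Finset.mem_filter.mp hx).1
    have hxw := (Finset.mem_filter.mp hx).2
    have hsub : S ⊆ {x, fun j => !(x j)} := by
      intro y hy
      have hyT : y ∈ T := (Finset.mem_filter.mp hy).1
      have hyw := (Finset.mem_filter.mp hy).2
      by_cases hxy : y = x
      · simp [hxy]
      · have := comp_of_not_crossing hn x y hxw hyw (fun h => hxy h.symm)
          (hT x hxT y hyT (fun h => hxy h.symm))
        simp [this]
    calc S.card ≤ ({x, fun j => !(x j)} : Finset (Fin n → Bool)).card :=
          Finset.card_le_card hsub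
      _ ≤ 2 := Finset.card_insert_le _ _ |>.trans (by simp)
end
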